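/- arXiv:2112.08884 — 5 statements merged into one kernel-verified Lean document; each statement's English description precedes it below -/
import Mathlib

section
/- Let C be a coloured Petri net, U its unfolding and S its skeleton, related by the net morphism μ with μ([p,c]) = p and μ([t,g]) = t. The extension σ of μ to markings, defined by σ(m_U)(p) = Σ_{c ∈ χ(p)} m_U([p,c]), is a surjective function from the markings of U (reachable and non-reachable) onto the markings of S, and it is an abstraction relation: for every marking m_S of S and every atomic proposition a_S of S with unfolding a_U, m_S satisfies a_S if and only if every marking m_U of U with σ(m_U) = m_S satisfies a_U. -/
set_option autoImplicit false

/-- A place/transition net: weight functions for arcs (weight 0 encodes "no arc")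
and an initial marking. -/
structure PTNet (P T : Type) where
  pre : P → T → ℕ
  post : T → P → ℕ
  m0 : P → ℕ

/-- Transition `t` is enabled in marking `m`. -/
def PTNet.Enabled {P T : Type} (N : PTNet P T) (m : P → ℕ) (t : T) : Prop :=
  ∀ p, N.pre p t ≤ m p

/-- Firing `t` leads from marking `m` to marking `m'` (written `m →t m'`). -/
def PTNet.Fires {P T : Type} (N : PTNet P T) (m : P → ℕ) (t : T) (m' : P → ℕ) : Prop :=
  N.Enabled m t ∧ ∀ p, m' p = m p - N.pre p t + N.post t p

/-- A (uniform) coloured Petri net: arc weights are finite sets of variables, each place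
has a finite nonempty colour domain, each transition has a guard, and the initial marking
puts a multiset over `chi p` on each place `p`. -/
structure ColouredNet (P T Var Colour : Type) where
  Wpre : P → T → Finset Var
  Wpost : T → P → Finset Var
  chi : P → Finset Colour
  chi_nonempty : ∀ p, (chi p).Nonempty
  guard : T → (Var → Colour) → Prop
  m0 : P → Colour → ℕ
  m0_supp : ∀ p c, c ∉ chi p → m0 p c = 0

/-- A firing mode of transition `t`: an assignment of colours to variables that respects
the colour domains of the adjacent places and satisfies the guard of `t`. -/
def IsMode {P T Var Colour : Type} (C : ColouredNet P T Var Colour) (t : T)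
    (g : Var → Colour) : Prop :=
  (∀ p, ∀ x ∈ C.Wpre p t, g x ∈ C.chi p) ∧
  (∀ p, ∀ x ∈ C.Wpost t p, g x ∈ C.chi p) ∧ C.guard t g

/-- Places of the unfolding: pairs `[p,c]` with `c` in the colour domain of `p`. -/
abbrev UPlace {P T Var Colour : Type} (C : ColouredNet P T Var Colour) : Type :=
  {pc : P × Colour // pc.2 ∈ C.chi pc.1}

/-- Transitions of the unfolding: pairs `[t,g]` where `g` is a firing mode of `t`. -/
abbrev UTrans {P T Var Colour : Type} (C : ColouredNet P T Var Colour) : Type :=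
  {tg : T × (Var → Colour) // IsMode C tg.1 tg.2}

/-- The unfolding of a coloured net, as a P/T net. -/
def unfoldNet {P T Var Colour : Type} [DecidableEq Colour]
    (C : ColouredNet P T Var Colour) : PTNet (UPlace C) (UTrans C) where
  pre := fun pc tg =>
    ((C.Wpre pc.val.1 tg.val.1).filter (fun x => tg.val.2 x = pc.val.2)).card
  post := fun tg pc =>
    ((C.Wpost tg.val.1 pc.val.1).filter (fun x => tg.val.2 x = pc.val.2)).card
  m0 := fun pc => C.m0 pc.val.1 pc.val.2

/-- The skeleton of a coloured net, as a P/T net. -/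
def skelNet {P T Var Colour : Type} (C : ColouredNet P T Var Colour) : PTNet P T where
  pre := fun p t => (C.Wpre p t).card
  post := fun t p => (C.Wpost t p).card
  m0 := fun p => ∑ c ∈ C.chi p, C.m0 p c

/-- An atomic proposition `k₁p₁ + … + kₙpₙ ≤ k`, given by integer coefficients and a bound. -/
structure AtomicProp (P : Type) where
  coeff : P → ℤ
  bound : ℤ

/-- Satisfaction of an atomic proposition by a marking of a P/T net. -/
def APsatPT {P : Type} [Fintype P] (a : AtomicProp P) (m : P → ℕ) : Prop :=
  ∑ p : P, a.coeff p * (m p : ℤ) ≤ a.bound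

/-- Satisfaction, by a marking of the unfolding, of the unfolding of an atomic proposition
(each place `p` is substituted by the sum of the places `[p,c]` for `c ∈ chi p`). -/
def APsatU {P T Var Colour : Type} [Fintype P] [Fintype Colour] [DecidableEq Colour]
    (C : ColouredNet P T Var Colour) (a : AtomicProp P) (m : UPlace C → ℕ) : Prop :=
  ∑ u : UPlace C, a.coeff u.val.1 * (m u : ℤ) ≤ a.bound

/-- Extension of the net morphism from the unfolding to the skeleton to markings:
`σ(m)(p) = ∑_{c ∈ chi p} m [p,c]`. -/
def skel {P T Var Colour : Type} (C : ColouredNet P T Var Colour)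
    (m : UPlace C → ℕ) : P → ℕ :=
  fun p => ∑ c ∈ (C.chi p).attach, m ⟨(p, c.val), c.property⟩

/-- The extension `σ = skel C` of the net morphism to markings is a
surjective function from the markings of the unfolding onto the markings of the skeleton,
and it is an abstraction relation: a skeleton marking satisfies an atomic proposition iff
all of its preimages satisfy the unfolded proposition. -/
theorem skel_is_abstraction
    {P T Var Colour : Type} [Fintype P] [Fintype T] [Fintype Var] [Fintype Colour]
    [DecidableEq Colour]
    (C : ColouredNet P T Var Colour) :
    Function.Surjective (skel C) ∧
      ∀ (mS : P → ℕ) (a : AtomicProp P),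
        APsatPT a mS ↔ ∀ mU : UPlace C → ℕ, skel C mU = mS → APsatU C a mU := by
  classical
  have key : ∀ (a : AtomicProp P) (mU : UPlace C → ℕ),
      ∑ u : UPlace C, a.coeff u.val.1 * (mU u : ℤ)
        = ∑ p : P, a.coeff p * (skel C mU p : ℤ) := by
    intro a mU
    rw [← Fintype.sum_equiv
      (⟨fun x => ⟨(x.1, x.2.val), x.2.property⟩,
        fun u => ⟨u.val.1, ⟨u.val.2, u.property⟩⟩,
        fun _ => rfl, fun _ => rfl⟩ : (Σ p : P, {c // c ∈ C.chi p}) ≃ UPlace C)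
      (fun x => a.coeff x.1 * (mU ⟨(x.1, x.2.val), x.2.property⟩ : ℤ)) _
      (fun _ => rfl), ← Finset.univ_sigma_univ, Finset.sum_sigma]
    refine Finset.sum_congr rfl fun p _ => ?_
    simp [skel, Finset.mul_sum, Finset.univ_eq_attach]
  have surj : Function.Surjective (skel C) := by
    intro mS
    choose c0 hc0 using C.chi_nonempty
    refine ⟨fun u => if u.val.2 = c0 u.val.1 then mS u.val.1 else 0, ?_⟩
    funext p
    simp only [skel]
    rw [Finset.sum_attach (C.chi p) (fun c => if c = c0 p then mS p else 0),
      Finset.sum_ite_eq' (C.chi p) (c0 p) (fun _ => mS p), if_pos (hc0 p)]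
  refine ⟨surj, fun mS a => ?_⟩
  constructor
  · intro h mU hmU
    unfold APsatU
    rw [key a mU, hmU]
    exact h
  · intro h
    obtain ⟨mU, hmU⟩ := surj mS
    have := h mU hmU
    unfold APsatU at this
    rwa [key a mU, hmU] at this
end

section
/- Let C be a coloured Petri net without deadlocks (no reachable marking of its unfolding U is dead), and let S be its skeleton. Then the net morphism μ from U to S (μ([p,c]) = p, μ([t,g]) = t), extended to markings, induces a simulation relation between the reachability graphs of U and S viewed as Kripke structures. Consequently every ACTL* formula that holds in S also holds in U. -/
set_option autoImplicit false

/-- Reachability `m →* m'` in a P/T net. -/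
def ReachPT {P T : Type} (N : PTNet P T) (m m' : P → ℕ) : Prop :=
  Relation.ReflTransGen (fun x y => ∃ t, N.Fires x t y) m m'

/-- A Kripke structure (transition labels are irrelevant for the CTL* semantics and
omitted); `L` is the labelling with atomic propositions. -/
structure Kripke (S AP : Type) where
  init : S
  R : S → S → Prop
  L : S → AP → Prop

/-- Infinite paths of a Kripke structure. -/
def Kripke.IsPath {S AP : Type} (K : Kripke S AP) (π : ℕ → S) : Prop :=
  ∀ i, K.R (π i) (π (i + 1))

/-- The suffix of a path starting at position `i`. -/
def pshift {S : Type} (π : ℕ → S) (i : ℕ) : ℕ → S := fun j => π (i + j)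

/-- Syntax of CTL*: atomic propositions, Boolean connectives, temporal operators
X, F, G, U, W, R and path quantifiers A, E. -/
inductive CTLs (AP : Type) : Type where
  | atom : AP → CTLs AP
  | conj : CTLs AP → CTLs AP → CTLs AP
  | disj : CTLs AP → CTLs AP → CTLs AP
  | neg : CTLs AP → CTLs AP
  | next : CTLs AP → CTLs AP
  | fut : CTLs AP → CTLs AP
  | glob : CTLs AP → CTLs AP
  | untl : CTLs AP → CTLs AP → CTLs AP
  | wuntl : CTLs AP → CTLs AP → CTLs AP
  | release : CTLs AP → CTLs AP → CTLs AP
  | aquant : CTLs AP → CTLs AP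
  | equant : CTLs AP → CTLs AP

/-- Satisfaction of a CTL* formula on an (infinite) path of a Kripke structure;
state formulas are evaluated at the first state of the path. -/
def pathSat {S AP : Type} (K : Kripke S AP) : CTLs AP → (ℕ → S) → Prop
  | .atom a, π => K.L (π 0) a
  | .conj φ ψ, π => pathSat K φ π ∧ pathSat K ψ π
  | .disj φ ψ, π => pathSat K φ π ∨ pathSat K ψ π
  | .neg φ, π => ¬ pathSat K φ π
  | .next φ, π => pathSat K φ (pshift π 1)
  | .fut φ, π => ∃ i, pathSat K φ (pshift π i)
  | .glob φ, π => ∀ i, pathSat K φ (pshift π i)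
  | .untl φ ψ, π => ∃ i, pathSat K ψ (pshift π i) ∧ ∀ j, j < i → pathSat K φ (pshift π j)
  | .wuntl φ ψ, π => (∀ i, pathSat K φ (pshift π i)) ∨
      (∃ i, pathSat K ψ (pshift π i) ∧ ∀ j, j < i → pathSat K φ (pshift π j))
  | .release φ ψ, π => ∀ i, pathSat K ψ (pshift π i) ∨ ∃ j, j < i ∧ pathSat K φ (pshift π j)
  | .aquant φ, π => ∀ π', K.IsPath π' → π' 0 = π 0 → pathSat K φ π'
  | .equant φ, π => ∃ π', K.IsPath π' ∧ π' 0 = π 0 ∧ pathSat K φ π'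

/-- A state satisfies a CTL* formula if all paths of the structure starting in it do. -/
def stateSat {S AP : Type} (K : Kripke S AP) (q : S) (φ : CTLs AP) : Prop :=
  ∀ π, K.IsPath π → π 0 = q → pathSat K φ π

/-- A Kripke structure satisfies a CTL* formula if its initial state does
(for path formulas: if all paths starting in the initial state do). -/
def kripkeSat {S AP : Type} (K : Kripke S AP) (φ : CTLs AP) : Prop :=
  stateSat K K.init φ

/-- The fragment ACTL* of CTL*: formulas containing neither `E` nor `¬`. -/
def IsACTLs {AP : Type} : CTLs AP → Prop
  | .atom _ => True
  | .conj φ ψ => IsACTLs φ ∧ IsACTLs ψ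
  | .disj φ ψ => IsACTLs φ ∧ IsACTLs ψ
  | .neg _ => False
  | .next φ => IsACTLs φ
  | .fut φ => IsACTLs φ
  | .glob φ => IsACTLs φ
  | .untl φ ψ => IsACTLs φ ∧ IsACTLs ψ
  | .wuntl φ ψ => IsACTLs φ ∧ IsACTLs ψ
  | .release φ ψ => IsACTLs φ ∧ IsACTLs ψ
  | .aquant φ => IsACTLs φ
  | .equant _ => False

/-- Abstraction relation between Kripke structures: a surjective function on states such
that an abstract state satisfies an atomic proposition iff all of its concrete preimages do. -/
def IsAbstraction {Q Q' AP : Type} (K : Kripke Q AP) (K' : Kripke Q' AP) (σ : Q → Q') :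
    Prop :=
  Function.Surjective σ ∧ ∀ q' a, K'.L q' a ↔ ∀ q, σ q = q' → K.L q a

/-- Simulation relation: an abstraction relation that transfers reachability (`→*`). -/
def IsSimulation {Q Q' AP : Type} (K : Kripke Q AP) (K' : Kripke Q' AP) (σ : Q → Q') :
    Prop :=
  IsAbstraction K K' σ ∧
  ∀ q q₁ q', Relation.ReflTransGen K.R q q₁ → σ q = q' →
    ∃ q₁', Relation.ReflTransGen K'.R q' q₁' ∧ σ q₁ = q₁'

/-- The Kripke structure of a P/T net: states are markings, transitions are firings, and
a silent τ self-loop is added at every deadlock (dead marking). -/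
def KripkeOfNet {P T A : Type} (N : PTNet P T) (L : (P → ℕ) → A → Prop) :
    Kripke (P → ℕ) A where
  init := N.m0
  R := fun m m' => (∃ t, N.Fires m t m') ∨ ((∀ t, ¬ N.Enabled m t) ∧ m' = m)
  L := L

section SkelAux

variable {P T Var Colour : Type} [DecidableEq Colour] (C : ColouredNet P T Var Colour)

lemma skel_fires {m m' : UPlace C → ℕ} (tg : UTrans C)
    (h : (unfoldNet C).Fires m tg m') :
    (skelNet C).Fires (skel C m) tg.val.1 (skel C m') := by
  obtain ⟨⟨t, g⟩, hg⟩ := tg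
  obtain ⟨hen, heq⟩ := h
  have hpre : ∀ p : P, (skelNet C).pre p t
      = ∑ c ∈ (C.chi p).attach,
          (unfoldNet C).pre ⟨(p, c.val), c.property⟩ ⟨(t, g), hg⟩ := by
    intro p
    have hfib := Finset.card_eq_sum_card_fiberwise
      (f := g) (s := C.Wpre p t) (t := C.chi p) (fun x hx => hg.1 p x hx)
    show (C.Wpre p t).card = _
    rw [hfib, ← Finset.sum_attach (C.chi p)
      (fun c => ((C.Wpre p t).filter (fun x => g x = c)).card)]
    rfl
  have hpost : ∀ p : P, (skelNet C).post t p
      = ∑ c ∈ (C.chi p).attach,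
          (unfoldNet C).post ⟨(t, g), hg⟩ ⟨(p, c.val), c.property⟩ := by
    intro p
    have hfib := Finset.card_eq_sum_card_fiberwise
      (f := g) (s := C.Wpost t p) (t := C.chi p) (fun x hx => hg.2.1 p x hx)
    show (C.Wpost t p).card = _
    rw [hfib, ← Finset.sum_attach (C.chi p)
      (fun c => ((C.Wpost t p).filter (fun x => g x = c)).card)]
    rfl
  have henS : (skelNet C).Enabled (skel C m) t := by
    intro p
    rw [hpre p]
    exact Finset.sum_le_sum fun c _ => hen ⟨(p, c.val), c.property⟩
  refine ⟨henS, fun p => ?_⟩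
  have : skel C m' p = ∑ c ∈ (C.chi p).attach,
      (m ⟨(p, c.val), c.property⟩
        - (unfoldNet C).pre ⟨(p, c.val), c.property⟩ ⟨(t, g), hg⟩
        + (unfoldNet C).post ⟨(t, g), hg⟩ ⟨(p, c.val), c.property⟩) :=
    Finset.sum_congr rfl fun c _ => heq ⟨(p, c.val), c.property⟩
  rw [this, Finset.sum_add_distrib,
    Finset.sum_tsub_distrib _ (fun c _ => hen ⟨(p, c.val), c.property⟩),
    ← hpre p, ← hpost p]
  rfl

lemma skel_surj : Function.Surjective (skel C) := by
  intro ms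
  have hchoice := C.chi_nonempty
  choose c0 hc0 using hchoice
  refine ⟨fun u => if u.val.2 = c0 u.val.1 then ms u.val.1 else 0, ?_⟩
  funext p
  show (∑ c ∈ (C.chi p).attach,
    (fun x => if x = c0 p then ms p else 0) c.val) = ms p
  rw [Finset.sum_attach (C.chi p) (fun x => if x = c0 p then ms p else 0),
    Finset.sum_ite_eq' (C.chi p) (c0 p) (fun _ => ms p), if_pos (hc0 p)]

lemma skel_m0 : skel C (unfoldNet C).m0 = (skelNet C).m0 := by
  funext p
  show (∑ c ∈ (C.chi p).attach, (fun x => C.m0 p x) c.val) = _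
  rw [Finset.sum_attach (C.chi p) (fun x => C.m0 p x)]
  rfl

/-- Equivalence between places of the unfolding and a sigma type. -/
def uplaceEquiv : UPlace C ≃ Σ p : P, {c : Colour // c ∈ C.chi p} where
  toFun u := ⟨u.val.1, ⟨u.val.2, u.property⟩⟩
  invFun s := ⟨(s.1, s.2.val), s.2.property⟩
  left_inv := by rintro ⟨⟨p, c⟩, h⟩; rfl
  right_inv := by rintro ⟨p, c, h⟩; rfl

lemma apsat_iff [Fintype P] [Fintype Colour] (a : AtomicProp P) (m : UPlace C → ℕ) :
    APsatU C a m ↔ APsatPT a (skel C m) := by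
  have key : ∑ u : UPlace C, a.coeff u.val.1 * (m u : ℤ)
      = ∑ p : P, a.coeff p * ((skel C m p : ℕ) : ℤ) := by
    rw [← Equiv.sum_comp (uplaceEquiv C).symm
      (fun u : UPlace C => a.coeff u.val.1 * (m u : ℤ))]
    rw [← Finset.univ_sigma_univ, Finset.sum_sigma]
    refine Finset.sum_congr rfl fun p _ => ?_
    have : ((skel C m p : ℕ) : ℤ) = ∑ c ∈ (C.chi p).attach,
        ((m ⟨(p, c.val), c.property⟩ : ℕ) : ℤ) := by
      unfold skel; push_cast; rfl
    rw [this, Finset.mul_sum, ← Finset.univ_eq_attach]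
    rfl
  unfold APsatU APsatPT
  rw [key]

end SkelAux
section PathAux

variable {P T Var Colour : Type} [Fintype P] [Fintype Colour] [DecidableEq Colour] (C : ColouredNet P T Var Colour)

lemma pshift_isPath {S AP : Type} {K : Kripke S AP} {π : ℕ → S}
    (h : K.IsPath π) (i : ℕ) : K.IsPath (pshift π i) :=
  fun j => h (i + j)

lemma reach_of_step {m m' : UPlace C → ℕ}
    (h : (KripkeOfNet (unfoldNet C) (fun m a => APsatU C a m)).R m m')
    (hr : ReachPT (unfoldNet C) (unfoldNet C).m0 m) :
    ReachPT (unfoldNet C) (unfoldNet C).m0 m' := by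
  rcases h with ⟨t, hf⟩ | ⟨_, rfl⟩
  · exact hr.tail ⟨t, hf⟩
  · exact hr

lemma reach_all {π : ℕ → UPlace C → ℕ}
    (hπ : (KripkeOfNet (unfoldNet C) (fun m a => APsatU C a m)).IsPath π)
    (h0 : ReachPT (unfoldNet C) (unfoldNet C).m0 (π 0)) (i : ℕ) :
    ReachPT (unfoldNet C) (unfoldNet C).m0 (π i) := by
  induction i with
  | zero => exact h0
  | succ n ih => exact reach_of_step C (hπ n) ih

lemma skel_R {m m' : UPlace C → ℕ}
    (h : (KripkeOfNet (unfoldNet C) (fun m a => APsatU C a m)).R m m')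
    (hnd : ∃ tg, (unfoldNet C).Enabled m tg) :
    (KripkeOfNet (skelNet C) (fun m a => APsatPT a m)).R (skel C m) (skel C m') := by
  rcases h with ⟨t, hf⟩ | ⟨hdead, _⟩
  · exact Or.inl ⟨t.val.1, skel_fires C t hf⟩
  · obtain ⟨tg, htg⟩ := hnd
    exact absurd htg (hdead tg)

lemma skel_path {π : ℕ → UPlace C → ℕ}
    (hnodead : ∀ m, ReachPT (unfoldNet C) (unfoldNet C).m0 m →
        ∃ tg, (unfoldNet C).Enabled m tg)
    (hπ : (KripkeOfNet (unfoldNet C) (fun m a => APsatU C a m)).IsPath π)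
    (h0 : ReachPT (unfoldNet C) (unfoldNet C).m0 (π 0)) :
    (KripkeOfNet (skelNet C) (fun m a => APsatPT a m)).IsPath (skel C ∘ π) :=
  fun i => skel_R C (hπ i) (hnodead (π i) (reach_all C hπ h0 i))

lemma skel_reflTrans {m m₁ : UPlace C → ℕ}
    (h : Relation.ReflTransGen
      (KripkeOfNet (unfoldNet C) (fun m a => APsatU C a m)).R m m₁) :
    Relation.ReflTransGen
      (KripkeOfNet (skelNet C) (fun m a => APsatPT a m)).R (skel C m) (skel C m₁) := by
  induction h with
  | refl => exact .refl
  | tail _ hbc ih =>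
    rcases hbc with ⟨t, hf⟩ | ⟨_, rfl⟩
    · exact ih.tail (Or.inl ⟨t.val.1, skel_fires C t hf⟩)
    · exact ih

lemma actl_transfer
    (hnodead : ∀ m, ReachPT (unfoldNet C) (unfoldNet C).m0 m →
        ∃ tg, (unfoldNet C).Enabled m tg)
    (φ : CTLs (AtomicProp P)) :
    IsACTLs φ → ∀ π : ℕ → UPlace C → ℕ,
      (KripkeOfNet (unfoldNet C) (fun m a => APsatU C a m)).IsPath π →
      ReachPT (unfoldNet C) (unfoldNet C).m0 (π 0) →
      pathSat (KripkeOfNet (skelNet C) (fun m a => APsatPT a m)) φ (skel C ∘ π) →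
      pathSat (KripkeOfNet (unfoldNet C) (fun m a => APsatU C a m)) φ π := by
  induction φ with
  | atom a =>
    intro _ π hπ hr hs
    exact (apsat_iff C a (π 0)).2 hs
  | conj φ ψ ihφ ihψ =>
    intro hA π hπ hr hs
    exact ⟨ihφ hA.1 π hπ hr hs.1, ihψ hA.2 π hπ hr hs.2⟩
  | disj φ ψ ihφ ihψ =>
    intro hA π hπ hr hs
    rcases hs with hs | hs
    · exact Or.inl (ihφ hA.1 π hπ hr hs)
    · exact Or.inr (ihψ hA.2 π hπ hr hs)
  | neg φ ih => intro hA; exact absurd hA not_false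
  | next φ ih =>
    intro hA π hπ hr hs
    exact ih hA (pshift π 1) (pshift_isPath hπ 1) (reach_all C hπ hr 1) hs
  | fut φ ih =>
    intro hA π hπ hr hs
    obtain ⟨i, hi⟩ := hs
    exact ⟨i, ih hA (pshift π i) (pshift_isPath hπ i) (reach_all C hπ hr i) hi⟩
  | glob φ ih =>
    intro hA π hπ hr hs
    exact fun i => ih hA (pshift π i) (pshift_isPath hπ i) (reach_all C hπ hr i) (hs i)
  | untl φ ψ ihφ ihψ =>
    intro hA π hπ hr hs
    obtain ⟨i, hi, hj⟩ := hs
    exact ⟨i, ihψ hA.2 (pshift π i) (pshift_isPath hπ i) (reach_all C hπ hr i) hi,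
      fun j hji => ihφ hA.1 (pshift π j) (pshift_isPath hπ j) (reach_all C hπ hr j) (hj j hji)⟩
  | wuntl φ ψ ihφ ihψ =>
    intro hA π hπ hr hs
    rcases hs with hs | ⟨i, hi, hj⟩
    · exact Or.inl fun i =>
        ihφ hA.1 (pshift π i) (pshift_isPath hπ i) (reach_all C hπ hr i) (hs i)
    · exact Or.inr ⟨i,
        ihψ hA.2 (pshift π i) (pshift_isPath hπ i) (reach_all C hπ hr i) hi,
        fun j hji => ihφ hA.1 (pshift π j) (pshift_isPath hπ j) (reach_all C hπ hr j) (hj j hji)⟩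
  | release φ ψ ihφ ihψ =>
    intro hA π hπ hr hs
    intro i
    rcases hs i with hi | ⟨j, hji, hj⟩
    · exact Or.inl (ihψ hA.2 (pshift π i) (pshift_isPath hπ i) (reach_all C hπ hr i) hi)
    · exact Or.inr ⟨j, hji,
        ihφ hA.1 (pshift π j) (pshift_isPath hπ j) (reach_all C hπ hr j) hj⟩
  | aquant φ ih =>
    intro hA π hπ hr hs
    intro ρ hρ h0
    have hrρ : ReachPT (unfoldNet C) (unfoldNet C).m0 (ρ 0) := h0 ▸ hr
    refine ih hA ρ hρ hrρ (hs (skel C ∘ ρ) (skel_path C hnodead hρ hrρ) ?_)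
    show skel C (ρ 0) = skel C (π 0)
    rw [h0]
  | equant φ ih => intro hA; exact absurd hA not_false

end PathAux
/-- For a coloured net without deadlocks (no reachable marking of its
unfolding is dead), the net morphism from the unfolding to the skeleton, extended to
markings, induces a simulation relation between the reachability graphs viewed as Kripke
structures; consequently every ACTL* formula that holds in the skeleton holds in the
unfolding. -/
theorem deadlockFree_skeleton_simulation
    {P T Var Colour : Type} [Fintype P] [Fintype T] [Fintype Var] [Fintype Colour]
    [DecidableEq Colour]
    (C : ColouredNet P T Var Colour)
    (hnodead : ∀ m, ReachPT (unfoldNet C) (unfoldNet C).m0 m →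
        ∃ tg, (unfoldNet C).Enabled m tg) :
    IsSimulation (KripkeOfNet (unfoldNet C) (fun m a => APsatU C a m))
        (KripkeOfNet (skelNet C) (fun m a => APsatPT a m)) (skel C) ∧
      ∀ φ : CTLs (AtomicProp P), IsACTLs φ →
        kripkeSat (KripkeOfNet (skelNet C) (fun m a => APsatPT a m)) φ →
        kripkeSat (KripkeOfNet (unfoldNet C) (fun m a => APsatU C a m)) φ := by
  constructor
  · refine ⟨⟨skel_surj C, ?_⟩, ?_⟩
    · intro q' a
      constructor
      · intro h q hq
        show APsatU C a q
        rw [apsat_iff C a q, hq]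
        exact h
      · intro h
        obtain ⟨q, rfl⟩ := skel_surj C q'
        exact (apsat_iff C a q).1 (h q rfl)
    · intro q q₁ q' hreach hq
      exact ⟨skel C q₁, hq ▸ skel_reflTrans C hreach, rfl⟩
  · intro φ hφ hsat π hπ h0
    have hr : ReachPT (unfoldNet C) (unfoldNet C).m0 (π 0) := by
      rw [h0]
      exact Relation.ReflTransGen.refl
    refine actl_transfer C hnodead φ hφ π hπ hr ?_
    refine hsat (skel C ∘ π) (skel_path C hnodead hπ hr) ?_
    show skel C (π 0) = (skelNet C).m0
    rw [h0]
    exact skel_m0 C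
end

section
/- Let C be a uniform coloured Petri net. Then C has a deadlock-preserving skeleton if and only if every minimal transition class of C with respect to the partial order ≤ on equivalence classes is full. -/
set_option autoImplicit false

/-- A marking of a coloured net: a multiset over `chi p` on each place `p`. -/
def IsCMarking {P T Var Colour : Type} (C : ColouredNet P T Var Colour)
    (m : P → Colour → ℕ) : Prop :=
  ∀ p c, c ∉ C.chi p → m p c = 0

/-- Transition `t` is enabled in coloured marking `m` under firing mode `g`. -/
def EnabledC {P T Var Colour : Type} [DecidableEq Colour] (C : ColouredNet P T Var Colour)
    (m : P → Colour → ℕ) (t : T) (g : Var → Colour) : Prop :=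
  IsMode C t g ∧ ∀ p c, ((C.Wpre p t).filter (fun x => g x = c)).card ≤ m p c

/-- A dead marking (deadlock) of a coloured net: no transition is enabled in any firing
mode. -/
def DeadC {P T Var Colour : Type} [DecidableEq Colour] (C : ColouredNet P T Var Colour)
    (m : P → Colour → ℕ) : Prop :=
  ∀ t g, ¬ EnabledC C m t g

/-- The skeletal image of a coloured marking. -/
def skelCMark {P T Var Colour : Type} (C : ColouredNet P T Var Colour)
    (m : P → Colour → ℕ) : P → ℕ :=
  fun p => ∑ c ∈ C.chi p, m p c

/-- `C` has a deadlock-preserving skeleton: every dead marking of `C` has a dead skeletal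
image. -/
def DeadlockPreserving {P T Var Colour : Type} [DecidableEq Colour]
    (C : ColouredNet P T Var Colour) : Prop :=
  ∀ m, IsCMarking C m → DeadC C m → ∀ t, ¬ (skelNet C).Enabled (skelCMark C m) t

/-- The transition class of `t` is minimal w.r.t. the componentwise order on input
vectors `f(t) = (card (Wpre p t))_p`. -/
def MinimalClass {P T Var Colour : Type} (C : ColouredNet P T Var Colour) (t : T) : Prop :=
  ∀ t', (∀ p, (C.Wpre p t').card ≤ (C.Wpre p t).card) →
    ∀ p, (C.Wpre p t').card = (C.Wpre p t).card

/-- The transition class of `t` is full: every coloured marking matching the input size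
requirements of the class enables some transition of the class in some firing mode. -/
def FullClass {P T Var Colour : Type} [DecidableEq Colour]
    (C : ColouredNet P T Var Colour) (t : T) : Prop :=
  ∀ m, IsCMarking C m → (∀ p, ∑ c ∈ C.chi p, m p c = (C.Wpre p t).card) →
    ∃ t' g, (∀ p, (C.Wpre p t').card = (C.Wpre p t).card) ∧ EnabledC C m t' g

/-- Fibering the input variables of a transition over the colours of a place. -/
lemma sum_filter_card_eq {P T Var Colour : Type} [DecidableEq Colour]
    (C : ColouredNet P T Var Colour) {t : T} {g : Var → Colour}
    (h : IsMode C t g) (p : P) :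
    ∑ c ∈ C.chi p, ((C.Wpre p t).filter (fun x => g x = c)).card = (C.Wpre p t).card :=
  (Finset.card_eq_sum_card_fiberwise (fun x hx => h.1 p x hx)).symm

/-- Extract a sub-"multiset" of prescribed size. -/
lemma exists_sub_marking {Colour : Type} (s : Finset Colour)
    (f : Colour → ℕ) :
    ∀ k, k ≤ ∑ c ∈ s, f c → ∃ g : Colour → ℕ, (∀ c, g c ≤ f c) ∧
      (∀ c ∉ s, g c = 0) ∧ ∑ c ∈ s, g c = k := by
  classical
  intro k
  induction k with
  | zero => intro _; exact ⟨fun _ => 0, fun _ => Nat.zero_le _, fun _ _ => rfl, by simp⟩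
  | succ k ih =>
    intro hk
    obtain ⟨g, hg1, hg2, hg3⟩ := ih (Nat.le_of_succ_le hk)
    have hlt : ∑ c ∈ s, g c < ∑ c ∈ s, f c := by omega
    obtain ⟨c, hc, hcf⟩ := Finset.exists_lt_of_sum_lt hlt
    refine ⟨Function.update g c (g c + 1), ?_, ?_, ?_⟩
    · intro c'
      rcases eq_or_ne c' c with rfl | h
      · simpa using hcf
      · rw [Function.update_of_ne h]; exact hg1 c'
    · intro c' hc'
      rw [Function.update_of_ne (by rintro rfl; exact hc' hc)]
      exact hg2 c' hc'
    · rw [Finset.sum_update_of_mem hc, ← Finset.erase_eq]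
      have := Finset.add_sum_erase s g hc
      omega

/-- Below every transition class there is a minimal one. -/
lemma exists_minimal_below {P T Var Colour : Type} [Fintype P] [Fintype T]
    (C : ColouredNet P T Var Colour) (t : T) :
    ∃ t₀, (∀ p, (C.Wpre p t₀).card ≤ (C.Wpre p t).card) ∧ MinimalClass C t₀ := by
  classical
  set S : Finset T :=
    Finset.univ.filter (fun t' => ∀ p, (C.Wpre p t').card ≤ (C.Wpre p t).card) with hSdef
  have hS : t ∈ S := by simp [hSdef]
  obtain ⟨t₀, ht₀S, ht₀min⟩ :=
    S.exists_min_image (fun t' => ∑ p, (C.Wpre p t').card) ⟨t, hS⟩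
  have ht₀le : ∀ p, (C.Wpre p t₀).card ≤ (C.Wpre p t).card := by
    simpa [hSdef] using ht₀S
  refine ⟨t₀, ht₀le, ?_⟩
  intro t'' h'' p
  have hmem : t'' ∈ S := by
    simp only [hSdef, Finset.mem_filter, Finset.mem_univ, true_and]
    intro q; exact le_trans (h'' q) (ht₀le q)
  have hsum := ht₀min t'' hmem
  by_contra hne
  have hlt : (C.Wpre p t'').card < (C.Wpre p t₀).card := lt_of_le_of_ne (h'' p) hne
  have : ∑ q, (C.Wpre q t'').card < ∑ q, (C.Wpre q t₀).card :=
    Finset.sum_lt_sum (fun q _ => h'' q) ⟨p, Finset.mem_univ p, hlt⟩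
  omega

/-- A uniform coloured net has a deadlock-preserving skeleton iff every
minimal transition class is full. -/
theorem deadlockPreserving_iff_minimal_full
    {P T Var Colour : Type} [Fintype P] [Fintype T] [Fintype Var] [Fintype Colour]
    [DecidableEq Colour]
    (C : ColouredNet P T Var Colour) :
    DeadlockPreserving C ↔ ∀ t, MinimalClass C t → FullClass C t := by
  constructor
  · -- deadlock-preserving ⇒ minimal classes full
    intro hDP t hmin m hm hsum
    by_contra hfull
    push_neg at hfull
    have hdead : DeadC C m := by
      intro t' g hE
      have hle : ∀ p, (C.Wpre p t').card ≤ (C.Wpre p t).card := by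
        intro p
        calc (C.Wpre p t').card
            = ∑ c ∈ C.chi p, ((C.Wpre p t').filter (fun x => g x = c)).card :=
              (sum_filter_card_eq C hE.1 p).symm
          _ ≤ ∑ c ∈ C.chi p, m p c := Finset.sum_le_sum (fun c _ => hE.2 p c)
          _ = (C.Wpre p t).card := hsum p
      exact hfull t' g (hmin t' hle) hE
    exact hDP m hm hdead t (fun p => (hsum p).ge)
  · -- all minimal classes full ⇒ deadlock-preserving
    intro hFull m hm hdead t hEn
    -- hEn : skeleton enables t in the skeletal image
    obtain ⟨t₀, ht₀le, ht₀min⟩ := exists_minimal_below C t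
    have hk : ∀ p, (C.Wpre p t₀).card ≤ ∑ c ∈ C.chi p, m p c :=
      fun p => le_trans (ht₀le p) (hEn p)
    choose g hg1 hg2 hg3 using
      fun p => exists_sub_marking (C.chi p) (m p) ((C.Wpre p t₀).card) (hk p)
    have hm' : IsCMarking C (fun p => g p) := fun p c hc => hg2 p c hc
    obtain ⟨t', gm, _, hE⟩ := hFull t₀ ht₀min (fun p => g p) hm' hg3
    refine hdead t' gm ⟨hE.1, fun p c => ?_⟩
    exact le_trans (hE.2 p c) (hg1 p c)
end

section
/- Let C be a uniform coloured Petri net with a deadlock-preserving skeleton, U its unfolding and S its skeleton. Then the net morphism μ from U to S (μ([p,c]) = p, μ([t,g]) = t), extended to markings, induces a simulation relation between the reachability graphs of U and S viewed as Kripke structures (with silent τ self-loops added at all deadlock states). Consequently every ACTL* formula that holds in S also holds in U. -/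
set_option autoImplicit false

section Aux

variable {P T Var Colour : Type} [DecidableEq Colour]

/-- Sum over the places of the unfolding, rewritten as a double sum. -/
lemma sum_uplace [Fintype P] [Fintype Colour] {M : Type} [AddCommMonoid M]
    (C : ColouredNet P T Var Colour) (f : UPlace C → M) :
    ∑ u : UPlace C, f u =
      ∑ p : P, ∑ c ∈ (C.chi p).attach, f ⟨(p, c.val), c.property⟩ := by
  let e : (Σ p : P, {c : Colour // c ∈ C.chi p}) ≃ UPlace C :=
    { toFun := fun x => ⟨(x.1, x.2.val), x.2.property⟩
      invFun := fun u => ⟨u.val.1, ⟨u.val.2, u.property⟩⟩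
      left_inv := fun ⟨p, c, h⟩ => rfl
      right_inv := fun ⟨⟨p, c⟩, h⟩ => rfl }
  rw [← e.sum_comp f, ← Finset.univ_sigma_univ, Finset.sum_sigma]
  exact Finset.sum_congr rfl fun p _ => rfl

lemma sum_filter_card (C : ColouredNet P T Var Colour) {p : P} {s : Finset Var}
    {g : Var → Colour} (h : ∀ x ∈ s, g x ∈ C.chi p) :
    ∑ c ∈ C.chi p, (s.filter fun x => g x = c).card = s.card :=
  (Finset.card_eq_sum_card_fiberwise h).symm

/-- The skeleton of an unfolded firing. -/
lemma fires_skel (C : ColouredNet P T Var Colour) {m m' : UPlace C → ℕ} {tg : UTrans C}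
    (h : (unfoldNet C).Fires m tg m') :
    (skelNet C).Fires (skel C m) tg.val.1 (skel C m') := by
  obtain ⟨hen, heq⟩ := h
  have hpre : ∀ p, (skelNet C).pre p tg.val.1 =
      ∑ c ∈ (C.chi p).attach, (unfoldNet C).pre ⟨(p, c.val), c.property⟩ tg := by
    intro p
    show (C.Wpre p tg.val.1).card = ∑ c ∈ (C.chi p).attach,
      ((C.Wpre p tg.val.1).filter (fun x => tg.val.2 x = c.val)).card
    rw [Finset.sum_attach (C.chi p)
      (fun c => ((C.Wpre p tg.val.1).filter (fun x => tg.val.2 x = c)).card)]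
    exact (sum_filter_card C (tg.property.1 p)).symm
  have hpost : ∀ p, (skelNet C).post tg.val.1 p =
      ∑ c ∈ (C.chi p).attach, (unfoldNet C).post tg ⟨(p, c.val), c.property⟩ := by
    intro p
    show (C.Wpost tg.val.1 p).card = ∑ c ∈ (C.chi p).attach,
      ((C.Wpost tg.val.1 p).filter (fun x => tg.val.2 x = c.val)).card
    rw [Finset.sum_attach (C.chi p)
      (fun c => ((C.Wpost tg.val.1 p).filter (fun x => tg.val.2 x = c)).card)]
    exact (sum_filter_card C (tg.property.2.1 p)).symm
  have hesk : (skelNet C).Enabled (skel C m) tg.val.1 := by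
    intro p
    rw [hpre p]
    exact Finset.sum_le_sum fun c _ => hen _
  refine ⟨hesk, fun p => ?_⟩
  have hsum : skel C m' p + (skelNet C).pre p tg.val.1 =
      skel C m p + (skelNet C).post tg.val.1 p := by
    rw [hpre p, hpost p, skel, skel, ← Finset.sum_add_distrib, ← Finset.sum_add_distrib]
    refine Finset.sum_congr rfl fun c _ => ?_
    have h1 := hen (⟨(p, c.val), c.property⟩ : UPlace C)
    have h2 := heq (⟨(p, c.val), c.property⟩ : UPlace C)
    omega
  have := hesk p
  omega

/-- Coloured marking associated with a marking of the unfolding. -/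
noncomputable def cmark (C : ColouredNet P T Var Colour) (m : UPlace C → ℕ) :
    P → Colour → ℕ :=
  fun p c => if h : c ∈ C.chi p then m ⟨(p, c), h⟩ else 0

lemma skel_cmark (C : ColouredNet P T Var Colour) (m : UPlace C → ℕ) :
    skelCMark C (cmark C m) = skel C m := by
  funext p
  rw [skelCMark, skel, ← Finset.sum_attach (C.chi p) (fun c => cmark C m p c)]
  exact Finset.sum_congr rfl fun c _ => dif_pos c.property

/-- Single-step simulation. -/
lemma step_skel (C : ColouredNet P T Var Colour) (hdp : DeadlockPreserving C)
    {m m' : UPlace C → ℕ}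
    (h : (∃ t, (unfoldNet C).Fires m t m') ∨
      ((∀ t, ¬ (unfoldNet C).Enabled m t) ∧ m' = m)) :
    (∃ t, (skelNet C).Fires (skel C m) t (skel C m')) ∨
      ((∀ t, ¬ (skelNet C).Enabled (skel C m) t) ∧ skel C m' = skel C m) := by
  rcases h with ⟨tg, hf⟩ | ⟨hdead, heq⟩
  · exact Or.inl ⟨tg.val.1, fires_skel C hf⟩
  · refine Or.inr ⟨?_, by rw [heq]⟩
    have hcm : IsCMarking C (cmark C m) := fun p c hc => dif_neg hc
    have hdc : DeadC C (cmark C m) := by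
      intro t g hg
      refine hdead ⟨(t, g), hg.1⟩ ?_
      rintro ⟨⟨p, c⟩, hc⟩
      have := hg.2 p c
      rw [cmark, dif_pos hc] at this
      exact this
    have := hdp (cmark C m) hcm hdc
    rwa [skel_cmark C m] at this

/-- Atomic propositions agree along the skeleton map. -/
lemma apsat_skel [Fintype P] [Fintype Colour] (C : ColouredNet P T Var Colour)
    (a : AtomicProp P) (m : UPlace C → ℕ) :
    APsatU C a m ↔ APsatPT a (skel C m) := by
  unfold APsatU APsatPT
  rw [sum_uplace C (fun u => a.coeff u.val.1 * (m u : ℤ))]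
  have : ∀ p : P, ∑ c ∈ (C.chi p).attach,
      a.coeff p * ((m ⟨(p, c.val), c.property⟩ : ℕ) : ℤ) =
      a.coeff p * ((skel C m p : ℕ) : ℤ) := by
    intro p
    rw [← Finset.mul_sum, skel]
    push_cast
    ring
  rw [Finset.sum_congr rfl fun p _ => this p]

lemma skel_surjective (C : ColouredNet P T Var Colour) :
    Function.Surjective (skel C) := by
  intro mh
  classical
  refine ⟨fun u => if u.val.2 = (C.chi_nonempty u.val.1).choose then mh u.val.1 else 0, ?_⟩
  funext p
  rw [skel]
  rw [Finset.sum_attach (C.chi p)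
    (fun c => if c = (C.chi_nonempty p).choose then mh p else 0)]
  rw [Finset.sum_ite_eq' (C.chi p) (C.chi_nonempty p).choose (fun _ => mh p)]
  rw [if_pos (C.chi_nonempty p).choose_spec]

/-- Transfer of ACTL* formulas along a step-preserving, label-reflecting map. -/
lemma actls_transfer {Q Q' AP : Type} (K : Kripke Q AP) (K' : Kripke Q' AP) (σ : Q → Q')
    (hstep : ∀ q q₁, K.R q q₁ → K'.R (σ q) (σ q₁))
    (hL : ∀ q a, K'.L (σ q) a → K.L q a) :
    ∀ φ : CTLs AP, IsACTLs φ → ∀ π, K.IsPath π → pathSat K' φ (σ ∘ π) → pathSat K φ π := by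
  have hpathmap : ∀ π, K.IsPath π → K'.IsPath (σ ∘ π) := fun π hπ i => hstep _ _ (hπ i)
  have hshift : ∀ (π : ℕ → Q) i, K.IsPath π → K.IsPath (pshift π i) := by
    intro π i hπ j
    simpa [pshift, Nat.add_assoc] using hπ (i + j)
  intro φ
  induction φ with
  | atom a => exact fun _ π _ h => hL _ _ h
  | conj φ ψ ihφ ihψ =>
    exact fun hφ π hπ h => ⟨ihφ hφ.1 π hπ h.1, ihψ hφ.2 π hπ h.2⟩
  | disj φ ψ ihφ ihψ =>
    exact fun hφ π hπ h => h.elim (fun h => Or.inl (ihφ hφ.1 π hπ h))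
      (fun h => Or.inr (ihψ hφ.2 π hπ h))
  | neg φ ih => exact fun hφ => hφ.elim
  | next φ ih =>
    exact fun hφ π hπ h => ih hφ (pshift π 1) (hshift π 1 hπ) h
  | fut φ ih =>
    rintro hφ π hπ ⟨i, h⟩
    exact ⟨i, ih hφ (pshift π i) (hshift π i hπ) h⟩
  | glob φ ih =>
    exact fun hφ π hπ h i => ih hφ (pshift π i) (hshift π i hπ) (h i)
  | untl φ ψ ihφ ihψ =>
    rintro hφ π hπ ⟨i, h1, h2⟩
    exact ⟨i, ihψ hφ.2 (pshift π i) (hshift π i hπ) h1,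
      fun j hj => ihφ hφ.1 (pshift π j) (hshift π j hπ) (h2 j hj)⟩
  | wuntl φ ψ ihφ ihψ =>
    rintro hφ π hπ (h | ⟨i, h1, h2⟩)
    · exact Or.inl fun i => ihφ hφ.1 (pshift π i) (hshift π i hπ) (h i)
    · exact Or.inr ⟨i, ihψ hφ.2 (pshift π i) (hshift π i hπ) h1,
        fun j hj => ihφ hφ.1 (pshift π j) (hshift π j hπ) (h2 j hj)⟩
  | release φ ψ ihφ ihψ =>
    intro hφ π hπ h i
    rcases h i with h1 | ⟨j, hj, h2⟩
    · exact Or.inl (ihψ hφ.2 (pshift π i) (hshift π i hπ) h1)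
    · exact Or.inr ⟨j, hj, ihφ hφ.1 (pshift π j) (hshift π j hπ) h2⟩
  | aquant φ ih =>
    intro hφ π hπ h ρ hρ h0
    exact ih hφ ρ hρ (h (σ ∘ ρ) (hpathmap ρ hρ) (by show σ (ρ 0) = σ (π 0); rw [h0]))
  | equant φ ih => exact fun hφ => hφ.elim

end Aux

/-- For a uniform coloured net with a deadlock-preserving skeleton, the
net morphism from the unfolding to the skeleton, extended to markings, induces a
simulation relation between the reachability graphs viewed as Kripke structures (with τ
self-loops at deadlocks); consequently every ACTL* formula that holds in the skeleton
holds in the unfolding. -/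
theorem deadlockPreserving_skeleton_simulation
    {P T Var Colour : Type} [Fintype P] [Fintype T] [Fintype Var] [Fintype Colour]
    [DecidableEq Colour]
    (C : ColouredNet P T Var Colour)
    (hdp : DeadlockPreserving C) :
    IsSimulation (KripkeOfNet (unfoldNet C) (fun m a => APsatU C a m))
        (KripkeOfNet (skelNet C) (fun m a => APsatPT a m)) (skel C) ∧
      ∀ φ : CTLs (AtomicProp P), IsACTLs φ →
        kripkeSat (KripkeOfNet (skelNet C) (fun m a => APsatPT a m)) φ →
        kripkeSat (KripkeOfNet (unfoldNet C) (fun m a => APsatU C a m)) φ := by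
  classical
  set KU := KripkeOfNet (unfoldNet C) (fun m a => APsatU C a m) with hKU
  set KS := KripkeOfNet (skelNet C) (fun m a => APsatPT a m) with hKS
  have hstep : ∀ q q₁, KU.R q q₁ → KS.R (skel C q) (skel C q₁) :=
    fun q q₁ h => step_skel C hdp h
  have hL : ∀ q a, KS.L (skel C q) a → KU.L q a := by
    intro q a h
    exact (apsat_skel C a q).mpr h
  have habs : IsAbstraction KU KS (skel C) := by
    refine ⟨skel_surjective C, fun q' a => ?_⟩
    constructor
    · intro h q hq
      subst hq
      exact (apsat_skel C a q).mpr h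
    · intro h
      obtain ⟨q, hq⟩ := skel_surjective C q'
      rw [← hq]
      exact (apsat_skel C a q).mp (h q hq)
  have hinit : skel C KU.init = KS.init := by
    funext p
    show skel C (unfoldNet C).m0 p = (skelNet C).m0 p
    rw [skel]
    exact Finset.sum_attach (C.chi p) (fun c => C.m0 p c)
  constructor
  · refine ⟨habs, fun q q₁ q' hrt hq => ?_⟩
    subst hq
    exact ⟨skel C q₁, Relation.ReflTransGen.lift (skel C) hstep _ _ hrt, rfl⟩
  · intro φ hφ hsat π hπ h0
    refine actls_transfer KU KS (skel C) hstep hL φ hφ π hπ ?_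
    refine hsat (skel C ∘ π) (fun i => hstep _ _ (hπ i)) ?_
    show skel C (π 0) = KS.init
    rw [h0, hinit]
end

section
/- Let C be a uniform coloured Petri net, U its unfolding, S its skeleton and S' its modified skeleton. Relate a marking m_S of S and a marking m_{S'} of S' if m_S(p) = m_{S'}(p) + m_{S'}(p̄) for every pre-place p of a non-full minimal transition class (p̄ its complement place) and m_S(p) = m_{S'}(p) for all other places p. Then the composition of the abstraction relation from markings of U to markings of S (induced by the net morphism μ) with this relation is an abstraction relation between the markings of U and the markings of S': related markings satisfy exactly the same atomic propositions. -/
set_option autoImplicit false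

/-- `p` is a pre-place of some non-full minimal transition class. -/
def PreNonFull {P T Var Colour : Type} [DecidableEq Colour]
    (C : ColouredNet P T Var Colour) (p : P) : Prop :=
  ∃ t, MinimalClass C t ∧ ¬ FullClass C t ∧ 0 < (C.Wpre p t).card

/-- Complement places of the modified skeleton. -/
abbrev CPlace {P T Var Colour : Type} [DecidableEq Colour]
    (C : ColouredNet P T Var Colour) : Type :=
  {p : P // PreNonFull C p}

/-- The modified skeleton `S'`: the skeleton plus, for every pre-place `p` of a non-full
minimal transition class, a complement place `p̄` and a recipient transition moving
single tokens from `p` to `p̄` (both arc weights 1). -/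
def modSkelNet {P T Var Colour : Type} [DecidableEq P] [DecidableEq Colour]
    (C : ColouredNet P T Var Colour) : PTNet (P ⊕ CPlace C) (T ⊕ CPlace C) where
  pre := fun x u =>
    match x, u with
    | Sum.inl p, Sum.inl t => (C.Wpre p t).card
    | Sum.inl p, Sum.inr q => if p = q.val then 1 else 0
    | Sum.inr _, _ => 0
  post := fun u x =>
    match u, x with
    | Sum.inl t, Sum.inl p => (C.Wpost t p).card
    | Sum.inl _, Sum.inr _ => 0
    | Sum.inr _, Sum.inl _ => 0
    | Sum.inr q, Sum.inr q' => if q.val = q'.val then 1 else 0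
  m0 := fun x =>
    match x with
    | Sum.inl p => ∑ c ∈ C.chi p, C.m0 p c
    | Sum.inr _ => 0

/-- The relation between markings of the unfolding `U` and markings of the modified
skeleton `S'`: the composition of the abstraction `skel` from `U` to `S` with the
relation `m_S(p) = m_{S'}(p) + m_{S'}(p̄)` for complemented places `p` and
`m_S(p) = m_{S'}(p)` for all other places. -/
def RelUS {P T Var Colour : Type} [DecidableEq P] [DecidableEq Colour]
    (C : ColouredNet P T Var Colour)
    (mU : UPlace C → ℕ) (m' : (P ⊕ CPlace C) → ℕ) : Prop :=
  (∀ p, ∀ h : PreNonFull C p,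
      skel C mU p = m' (Sum.inl p) + m' (Sum.inr ⟨p, h⟩)) ∧
  (∀ p, ¬ PreNonFull C p → skel C mU p = m' (Sum.inl p))

open Classical in
/-- Satisfaction of an atomic proposition (over the original places, not the complement
places) by a marking of the modified skeleton: the tokens on a complemented place `p` are
counted together with those on its complement place `p̄` (their sum is invariant under
the recipient transitions). -/
def APsatModS {P T Var Colour : Type} [Fintype P] [DecidableEq P] [DecidableEq Colour]
    (C : ColouredNet P T Var Colour) (a : AtomicProp P)
    (m' : (P ⊕ CPlace C) → ℕ) : Prop :=
  ∑ p : P, a.coeff p * ((m' (Sum.inl p) : ℤ) +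
      (if h : PreNonFull C p then (m' (Sum.inr ⟨p, h⟩) : ℤ) else 0)) ≤ a.bound

def uPlaceEquiv {P T Var Colour : Type} (C : ColouredNet P T Var Colour) :
    UPlace C ≃ Σ p : P, {c // c ∈ C.chi p} where
  toFun u := ⟨u.val.1, u.val.2, u.property⟩
  invFun s := ⟨(s.1, s.2.val), s.2.property⟩
  left_inv u := rfl
  right_inv s := rfl

/-- The composition of the abstraction from markings of the unfolding to
markings of the skeleton with the relation between markings of the skeleton and of the
modified skeleton is an abstraction relation between the markings of `U` and of `S'`:
related markings satisfy exactly the same atomic propositions. -/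
theorem relUS_abstraction
    {P T Var Colour : Type} [Fintype P] [Fintype T] [Fintype Var] [Fintype Colour]
    [DecidableEq P] [DecidableEq Colour]
    (C : ColouredNet P T Var Colour)
    (mU : UPlace C → ℕ) (m' : (P ⊕ CPlace C) → ℕ) (h : RelUS C mU m')
    (a : AtomicProp P) :
    APsatU C a mU ↔ APsatModS C a m' := by
  classical
  set e := uPlaceEquiv C with he
  have key : ∑ u : UPlace C, a.coeff u.val.1 * (mU u : ℤ)
      = ∑ p : P, a.coeff p * (skel C mU p : ℤ) := by
    rw [← Equiv.sum_comp e.symm (fun u => a.coeff u.val.1 * (mU u : ℤ)),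
      ← Finset.univ_sigma_univ, Finset.sum_sigma]
    refine Finset.sum_congr rfl (fun p _ => ?_)
    rw [Finset.univ_eq_attach, skel]
    push_cast
    rw [Finset.mul_sum]
    exact Finset.sum_congr rfl fun c _ => rfl
  have key2 : ∀ p : P, (skel C mU p : ℤ) = (m' (Sum.inl p) : ℤ) +
      (if hp : PreNonFull C p then (m' (Sum.inr ⟨p, hp⟩) : ℤ) else 0) := by
    intro p
    by_cases hp : PreNonFull C p
    · rw [dif_pos hp, h.1 p hp]; push_cast; ring
    · rw [dif_neg hp, h.2 p hp]; push_cast; ring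
  have key3 : ∑ p : P, a.coeff p * ((m' (Sum.inl p) : ℤ) +
      (if hp : PreNonFull C p then (m' (Sum.inr ⟨p, hp⟩) : ℤ) else 0))
      = ∑ p : P, a.coeff p * (skel C mU p : ℤ) :=
    Finset.sum_congr rfl fun p _ => by rw [key2 p]
  unfold APsatU APsatModS
  rw [key, ← key3]
end
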